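/- Let d ≥ 2, let β ∈ [1 − 1/d, 1], and let λ : Fin d → ℝ be a probability vector (λᵢ ≥ 0, Σᵢ λᵢ = 1) satisfying Σᵢ √λᵢ = √(d·β). Set t := (√((d−1)·β) + √(1−β))²/(d·(d−1)). Then ∏ᵢ λᵢ ≥ t^(d−1)·(1 − (d−1)·t). -/

import Mathlib

open scoped BigOperators

lemma log_aux1 {ρ : ℝ} (hρ : 1 ≤ ρ) : 2 * ρ * Real.log ρ ≤ ρ ^ 2 - 1 := by
  have hder : ∀ x ∈ interior (Set.Ici (1:ℝ)), HasDerivAt (fun x => x ^ 2 - 1 - 2 * x * Real.log x)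
      (2 * x - 2 * Real.log x - 2) x := by
    intro x hx
    rw [interior_Ici] at hx
    have hx0 : (0:ℝ) < x := lt_trans one_pos hx
    have h1 : HasDerivAt (fun x : ℝ => x ^ 2 - 1) (2 * x) x := by
      simpa using ((hasDerivAt_pow 2 x).sub_const 1)
    have h2 : HasDerivAt (fun x : ℝ => 2 * x * Real.log x) (2 * Real.log x + 2) x := by
      have := ((hasDerivAt_id x).const_mul (2:ℝ)).mul (Real.hasDerivAt_log hx0.ne')
      exact this.congr_deriv (by simp only [id_eq]; rw [mul_assoc 2 x, mul_inv_cancel₀ hx0.ne']; ring)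
    exact (h1.sub h2).congr_deriv (by ring)
  have hmono : MonotoneOn (fun x => x ^ 2 - 1 - 2 * x * Real.log x) (Set.Ici (1:ℝ)) := by
    apply monotoneOn_of_deriv_nonneg (convex_Ici 1)
    · apply ContinuousOn.sub
      · fun_prop
      · apply ContinuousOn.mul (by fun_prop)
        exact Real.continuousOn_log.mono (by intro x hx; simp at hx ⊢; linarith)
    · intro x hx
      exact (hder x hx).differentiableAt.differentiableWithinAt
    · intro x hx
      rw [(hder x hx).deriv]
      rw [interior_Ici] at hx
      have := Real.log_le_sub_one_of_pos (lt_trans one_pos hx)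
      linarith
  have h0 := hmono (Set.self_mem_Ici) (by exact hρ) hρ
  simp at h0
  linarith

lemma log_aux2 {ρ : ℝ} (hρ : 1 ≤ ρ) : 3 - 4 / ρ + 1 / ρ ^ 2 ≤ 2 * Real.log ρ := by
  have hder : ∀ x ∈ interior (Set.Ici (1:ℝ)), HasDerivAt (fun x => 2 * Real.log x - 3 + 4 / x - 1 / x ^ 2)
      (2 / x - 4 / x ^ 2 + 2 / x ^ 3) x := by
    intro x hx
    rw [interior_Ici] at hx
    have hx0 : (0:ℝ) < x := lt_trans one_pos hx
    have h1 : HasDerivAt (fun x : ℝ => 2 * Real.log x) (2 / x) x := by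
      have := (Real.hasDerivAt_log hx0.ne').const_mul (2:ℝ)
      exact this.congr_deriv (by ring)
    have h2 : HasDerivAt (fun x : ℝ => 4 / x) ((0 * x - 4 * 1) / x ^ 2) x :=
      (hasDerivAt_const x (4:ℝ)).div (hasDerivAt_id x) hx0.ne'
    have h3 : HasDerivAt (fun x : ℝ => 1 / x ^ 2) ((0 * x ^ 2 - 1 * (2 * x ^ 1)) / (x ^ 2) ^ 2) x :=
      (hasDerivAt_const x (1:ℝ)).div (hasDerivAt_pow 2 x) (by positivity)
    exact (((h1.sub_const 3).add h2).sub h3).congr_deriv (by field_simp; ring)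
  have hmono : MonotoneOn (fun x => 2 * Real.log x - 3 + 4 / x - 1 / x ^ 2) (Set.Ici (1:ℝ)) := by
    apply monotoneOn_of_deriv_nonneg (convex_Ici 1)
    · apply ContinuousOn.sub
      · apply ContinuousOn.add
        · apply ContinuousOn.sub
          · exact (Real.continuousOn_log.mono (by intro x hx; simp at hx ⊢; linarith)).const_smul 2 |>.congr (by intro x hx; simp)
          · fun_prop
        · apply ContinuousOn.div continuousOn_const (by fun_prop)
          intro x hx; simp at hx; positivity
      · apply ContinuousOn.div continuousOn_const (by fun_prop)
        intro x hx; simp at hx; positivity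
    · intro x hx
      exact (hder x hx).differentiableAt.differentiableWithinAt
    · intro x hx
      rw [(hder x hx).deriv]
      rw [interior_Ici] at hx
      have hx0 : (0:ℝ) < x := lt_trans one_pos hx
      have key : 2 / x - 4 / x ^ 2 + 2 / x ^ 3 = 2 * (x - 1) ^ 2 / x ^ 3 := by
        field_simp; ring
      rw [key]; positivity
  have h0 := hmono (Set.self_mem_Ici) (by exact hρ) hρ
  simp only [one_div] at h0 ⊢
  simp at h0
  linarith

noncomputable def tC2 (a b : ℝ) : ℝ := (a - b - a * Real.log (a / b)) / (a * (a - b) ^ 2)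
noncomputable def tC1 (a b : ℝ) : ℝ := 1 / a - 2 * tC2 a b * a


lemma tangent_eq {a b : ℝ} (hb : 0 < b) (hba : b < a) :
    Real.log a - Real.log b = tC1 a b * (a - b) + tC2 a b * (a ^ 2 - b ^ 2) := by
  have ha : 0 < a := hb.trans hba
  have hab : a - b ≠ 0 := by linarith
  rw [← Real.log_div ha.ne' hb.ne', tC1, tC2]
  field_simp
  ring

set_option maxHeartbeats 1000000 in
lemma tangent_ge {a b : ℝ} (hb : 0 < b) (hba : b < a) {x : ℝ} (hx : b ≤ x) :
    Real.log a + tC1 a b * (x - a) + tC2 a b * (x ^ 2 - a ^ 2) ≤ Real.log x := by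
  have ha : 0 < a := hb.trans hba
  have hab : (0:ℝ) < a - b := by linarith
  set L := Real.log (a / b) with hL
  clear_value L
  have hLlb : 1 - b / a < L := by
    have h1 : Real.log (b / a) < b / a - 1 :=
      Real.log_lt_sub_one_of_pos (div_pos hb ha) (by
        intro h
        field_simp at h
        linarith)
    have h2 : Real.log (b / a) = -L := by
      rw [hL, ← Real.log_inv]
      congr 1
      field_simp
    linarith
  have hC2neg : tC2 a b < 0 := by
    apply div_neg_of_neg_of_pos
    · have h3 := mul_lt_mul_of_pos_left hLlb ha
      have e : a * (1 - b / a) = a - b := by field_simp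
      rw [e] at h3
      rw [← hL]
      linarith
    · positivity
  have hρ : 1 ≤ a / b := by rw [le_div_iff₀ hb]; linarith
  have haux1 : 2 * a * b * L ≤ a ^ 2 - b ^ 2 := by
    have h := log_aux1 hρ
    have h2 := mul_le_mul_of_nonneg_right h (by positivity : (0:ℝ) ≤ b ^ 2)
    have e1 : 2 * (a / b) * Real.log (a / b) * b ^ 2 = 2 * a * b * L := by
      rw [← hL]; field_simp
    have e2 : ((a / b) ^ 2 - 1) * b ^ 2 = a ^ 2 - b ^ 2 := by field_simp
    rw [e1, e2] at h2
    exact h2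
  have haux2 : 3 * a ^ 2 - 4 * a * b + b ^ 2 ≤ 2 * a ^ 2 * L := by
    have h := log_aux2 hρ
    have h2 := mul_le_mul_of_nonneg_right h (by positivity : (0:ℝ) ≤ a ^ 2)
    have e1 : (3 - 4 / (a / b) + 1 / (a / b) ^ 2) * a ^ 2 = 3 * a ^ 2 - 4 * a * b + b ^ 2 := by
      field_simp
    have e2 : 2 * Real.log (a / b) * a ^ 2 = 2 * a ^ 2 * L := by rw [← hL]; ring
    rw [e1, e2] at h2
    exact h2
  -- the middle root r of g'
  set c2 := tC2 a b with hc2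
  set c1 := tC1 a b with hc1
  have hC2a : 2 * c2 * a < 0 := by
    have : 2 * c2 < 0 := by linarith
    exact mul_neg_of_neg_of_pos this ha
  have h2a : 2 * c2 * a ^ 2 ≤ -1 := by
    have e : 2 * c2 * a ^ 2 = (2 * a * (a - b - a * L)) / ((a - b) ^ 2) := by
      rw [hc2, tC2, ← hL]; field_simp
    rw [e, div_le_iff₀ (by positivity)]
    nlinarith [haux2]
  have h2b : -1 ≤ 2 * c2 * (a * b) := by
    have e : 2 * c2 * (a * b) = (2 * b * (a - b - a * L)) / ((a - b) ^ 2) := by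
      rw [hc2, tC2, ← hL]; field_simp
    rw [e, le_div_iff₀ (by positivity)]
    nlinarith [haux1]
  have heq : Real.log a - Real.log b = c1 * (a - b) + c2 * (a ^ 2 - b ^ 2) :=
    tangent_eq hb hba
  set r := -1 / (2 * c2 * a) with hr
  have hbr : b ≤ r := by
    rw [hr, le_div_iff_of_neg hC2a]
    nlinarith [h2b]
  have hra : r ≤ a := by
    rw [hr, div_le_iff_of_neg hC2a]
    nlinarith [h2a]
  have hrpos : 0 < r := lt_of_lt_of_le hb hbr
  -- factorization of the derivative numerator
  have hfac : ∀ y : ℝ, 2 * c2 * y ^ 2 + c1 * y - 1 = 2 * c2 * (y - r) * (y - a) := by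
    intro y
    have hc2ne : c2 ≠ 0 := ne_of_lt hC2neg
    rw [hr, hc1, tC1, ← hc2]
    field_simp
    ring
  clear_value c1 c2
  clear hc1 hc2
  clear_value r
  clear hr
  set g : ℝ → ℝ := fun y => Real.log y - c1 * y - c2 * y ^ 2 with hg
  have hgd : ∀ y : ℝ, 0 < y → HasDerivAt g (-(2 * c2 * (y - r) * (y - a)) / y) y := by
    intro y hy
    have h1 : HasDerivAt g (y⁻¹ - (c1 * 1) - c2 * (2 * y ^ 1)) y := by
      exact ((Real.hasDerivAt_log hy.ne').sub ((hasDerivAt_id y).const_mul c1)).sub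
        ((hasDerivAt_pow 2 y).const_mul c2)
    convert h1 using 1
    rw [← hfac y]
    field_simp
    ring
  have hcont : ∀ s : Set ℝ, s ⊆ Set.Ioi (0:ℝ) → ContinuousOn g s := by
    intro s hs
    intro y hy
    exact ((hgd y (hs hy)).differentiableAt).continuousAt.continuousWithinAt
  have hdiff : ∀ s : Set ℝ, s ⊆ Set.Ioi (0:ℝ) → DifferentiableOn ℝ g s := by
    intro s hs y hy
    exact ((hgd y (hs hy)).differentiableAt).differentiableWithinAt
  have mono1 : MonotoneOn g (Set.Icc b r) := by
    apply monotoneOn_of_deriv_nonneg (convex_Icc b r)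
    · exact hcont _ (fun y hy => lt_of_lt_of_le hb hy.1)
    · rw [interior_Icc]
      exact hdiff _ (fun y hy => lt_of_lt_of_le hb hy.1.le)
    · rw [interior_Icc]
      intro y hy
      have hy0 : 0 < y := lt_trans hb hy.1
      rw [(hgd y hy0).deriv]
      apply div_nonneg _ hy0.le
      have h1 : 0 < (r - y) * (a - y) :=
        mul_pos (by linarith [hy.2]) (by linarith [hy.2, hra])
      nlinarith [mul_neg_of_neg_of_pos hC2neg h1]
  have anti1 : AntitoneOn g (Set.Icc r a) := by
    apply antitoneOn_of_deriv_nonpos (convex_Icc r a)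
    · exact hcont _ (fun y hy => lt_of_lt_of_le hrpos hy.1)
    · rw [interior_Icc]
      exact hdiff _ (fun y hy => lt_of_lt_of_le hrpos hy.1.le)
    · rw [interior_Icc]
      intro y hy
      have hy0 : 0 < y := lt_trans hrpos hy.1
      rw [(hgd y hy0).deriv]
      apply div_nonpos_of_nonpos_of_nonneg _ hy0.le
      have h1 : 0 < (y - r) * (a - y) :=
        mul_pos (by linarith [hy.1]) (by linarith [hy.2])
      nlinarith [mul_neg_of_neg_of_pos hC2neg h1]
  have mono2 : MonotoneOn g (Set.Ici a) := by
    apply monotoneOn_of_deriv_nonneg (convex_Ici a)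
    · exact hcont _ (fun y hy => lt_of_lt_of_le ha hy)
    · rw [interior_Ici]
      exact hdiff _ (fun y hy => lt_of_lt_of_le ha (le_of_lt hy))
    · rw [interior_Ici]
      intro y hy
      have hy0 : 0 < y := lt_trans ha hy
      rw [(hgd y hy0).deriv]
      apply div_nonneg _ hy0.le
      have hya : a < y := hy
      have h1 : 0 < (y - r) * (y - a) :=
        mul_pos (by linarith) (by linarith)
      nlinarith [mul_neg_of_neg_of_pos hC2neg h1]
  have egb : g b = Real.log b - c1 * b - c2 * b ^ 2 := rfl
  have ega : g a = Real.log a - c1 * a - c2 * a ^ 2 := rfl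
  have hgba : g b = g a := by
    rw [egb, ega]; linarith [heq]
  have hkey : g a ≤ g x := by
    rcases le_total x r with hxr | hxr
    · have := mono1 ⟨le_refl b, hbr⟩ ⟨hx, hxr⟩ hx
      rw [hgba] at this
      exact this
    · rcases le_total x a with hxa | hxa
      · exact anti1 ⟨hxr, hxa⟩ ⟨hra, le_refl a⟩ hxa
      · exact mono2 (le_refl a) hxa hxa
  have egx : g x = Real.log x - c1 * x - c2 * x ^ 2 := rfl
  rw [ega, egx] at hkey
  linarith

lemma coord_aux {dd a b x : ℝ} (hd1 : 1 ≤ dd) (hb0 : 0 ≤ b) (hba : b ≤ a) (hx0 : 0 ≤ x)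
    (hxb : x < b) (hk : 1 - b^2 = dd*a^2) (hCS : ((dd*a + b) - x)^2 ≤ dd*(1 - x^2)) : False := by
  have hk2 : dd*(1 - b^2) = dd^2*a^2 := by rw [hk]; ring
  have hterm : 0 ≤ dd*(b-x)*(2*a-b-x) :=
    mul_nonneg (mul_nonneg (by linarith) (by linarith)) (by linarith)
  nlinarith [hCS, hk2, hterm, mul_pos (sub_pos.2 hxb) (sub_pos.2 hxb)]

set_option maxHeartbeats 1000000 in
/-- For a probability vector `λ` on `Fin d` with `∑ᵢ √λᵢ = √(dβ)`, `β ∈ [1−1/d, 1]`,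
and `t = (√((d−1)β) + √(1−β))²/(d(d−1))`, one has `∏ᵢ λᵢ ≥ t^(d−1)(1 − (d−1)t)`. -/
theorem prod_ge_of_overlap (d : ℕ) (hd : 2 ≤ d)
    (β : ℝ) (hβ : β ∈ Set.Icc (1 - 1 / (d : ℝ)) 1)
    (lam : Fin d → ℝ) (hlam : ∀ i, 0 ≤ lam i) (hsum : ∑ i, lam i = 1)
    (hs : ∑ i, Real.sqrt (lam i) = Real.sqrt (d * β))
    (t : ℝ)
    (ht : t = (Real.sqrt (((d : ℝ) - 1) * β) + Real.sqrt (1 - β)) ^ 2 /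
      ((d : ℝ) * ((d : ℝ) - 1))) :
    ∏ i, lam i ≥ t ^ (d - 1) * (1 - ((d : ℝ) - 1) * t) := by
  have hβ1 := hβ.1
  have hβ2 := hβ.2
  have hd2 : (2:ℝ) ≤ (d:ℝ) := by exact_mod_cast hd
  have hdpos : (0:ℝ) < (d:ℝ) := by linarith
  have hd1pos : (0:ℝ) < (d:ℝ) - 1 := by linarith
  have hd1 : (1:ℝ) ≤ (d:ℝ) - 1 := by linarith
  have hβpos : 0 < β := by
    have h12 : 1/(d:ℝ) ≤ 1/2 := by
      apply one_div_le_one_div_of_le <;> linarith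
    linarith
  have hβ0 : 0 ≤ β := hβpos.le
  have h1β : 0 ≤ 1 - β := by linarith
  -- ===== case β = 1 =====
  by_cases hbeq : β = 1
  · subst hbeq
    have ht1 : t = 1/(d:ℝ) := by
      rw [ht]
      rw [show (1:ℝ) - 1 = 0 by ring, Real.sqrt_zero, add_zero,
        show ((d:ℝ)-1)*1 = (d:ℝ)-1 by ring,
        Real.sq_sqrt (by linarith : (0:ℝ) ≤ (d:ℝ)-1)]
      field_simp
    have hs1 : ∑ i, Real.sqrt (lam i) = Real.sqrt (d:ℝ) := by
      rw [hs]; norm_num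
    have hc : Real.sqrt (1/(d:ℝ)) * Real.sqrt (d:ℝ) = 1 := by
      rw [← Real.sqrt_mul (by positivity)]
      rw [show 1/(d:ℝ)*(d:ℝ) = 1 by field_simp]
      exact Real.sqrt_one
    have hc2 : Real.sqrt (1/(d:ℝ)) ^ 2 = 1/(d:ℝ) := Real.sq_sqrt (by positivity)
    have hz : ∑ i, (Real.sqrt (lam i) - Real.sqrt (1/(d:ℝ)))^2 = 0 := by
      have e : ∀ i : Fin d, (Real.sqrt (lam i) - Real.sqrt (1/(d:ℝ)))^2
          = lam i - 2*Real.sqrt (1/(d:ℝ))*Real.sqrt (lam i) + 1/(d:ℝ) := by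
        intro i
        have h1 : Real.sqrt (lam i)^2 = lam i := Real.sq_sqrt (hlam i)
        linear_combination h1 + hc2
      rw [Finset.sum_congr rfl (fun i _ => e i)]
      rw [Finset.sum_add_distrib, Finset.sum_sub_distrib, hsum, ← Finset.mul_sum, hs1,
        Finset.sum_const, Finset.card_univ, Fintype.card_fin, nsmul_eq_mul]
      have hdd : (d:ℝ)*(1/(d:ℝ)) = 1 := by field_simp
      linear_combination (-2:ℝ)*hc + hdd
    have hx : ∀ i : Fin d, lam i = 1/(d:ℝ) := by
      intro i
      have h0 := (Finset.sum_eq_zero_iff_of_nonneg (fun i _ => sq_nonneg _)).1 hz i (Finset.mem_univ i)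
      have h1 : Real.sqrt (lam i) = Real.sqrt (1/(d:ℝ)) := by
        have h2 : Real.sqrt (lam i) - Real.sqrt (1/(d:ℝ)) = 0 :=
          pow_eq_zero_iff (two_ne_zero) |>.1 h0
        linarith only [h2]
      calc lam i = Real.sqrt (lam i)^2 := (Real.sq_sqrt (hlam i)).symm
        _ = Real.sqrt (1/(d:ℝ))^2 := by rw [h1]
        _ = 1/(d:ℝ) := hc2
    rw [Finset.prod_congr rfl (fun i _ => hx i), Finset.prod_const, Finset.card_univ,
      Fintype.card_fin, ht1]
    have h2 : 1 - ((d:ℝ)-1)*(1/(d:ℝ)) = 1/(d:ℝ) := by field_simp; ring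
    rw [h2, ← pow_succ, Nat.sub_add_cancel (by omega : 1 ≤ d)]
  -- ===== main case: β < 1 =====
  have hβlt : β < 1 := lt_of_le_of_ne hβ2 hbeq
  set u := Real.sqrt β with hu_def
  set v := Real.sqrt (1-β) with hv_def
  set p := Real.sqrt (d:ℝ) with hp_def
  set q := Real.sqrt ((d:ℝ)-1) with hq_def
  have hu2 : u^2 = β := Real.sq_sqrt hβ0
  have hv2 : v^2 = 1-β := Real.sq_sqrt h1β
  have hp2 : p^2 = (d:ℝ) := Real.sq_sqrt hdpos.le
  have hq2 : q^2 = (d:ℝ)-1 := Real.sq_sqrt (by linarith)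
  have hppos : 0 < p := Real.sqrt_pos.2 hdpos
  have hqpos : 0 < q := Real.sqrt_pos.2 hd1pos
  have hu0 : 0 ≤ u := Real.sqrt_nonneg _
  have hv0 : 0 ≤ v := Real.sqrt_nonneg _
  have hvpos : 0 < v := Real.sqrt_pos.2 (by linarith)
  have hpq : p^2 = q^2 + 1 := by rw [hp2, hq2]; ring
  have huv : u^2 + v^2 = 1 := by rw [hu2, hv2]; ring
  have htuv : t = (q*u + v)^2 / (p^2*q^2) := by
    have e1 : Real.sqrt (((d:ℝ)-1)*β) = q*u := Real.sqrt_mul (by linarith) β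
    rw [ht, e1, show (d:ℝ)*((d:ℝ)-1) = p^2*q^2 by rw [hp2, hq2]]
  set a := (q*u + v)/(p*q) with ha_def
  set b := (u - q*v)/p with hb_def
  have hqv_le_u : q*v ≤ u := by
    have hmul := mul_le_mul_of_nonneg_left hβ1 hdpos.le
    have hdd : (d:ℝ)*(1 - 1/(d:ℝ)) = (d:ℝ) - 1 := by field_simp
    rw [hdd] at hmul
    have h1 : ((d:ℝ)-1)*(1-β) ≤ β := by nlinarith only [hmul]
    calc q*v = Real.sqrt (((d:ℝ)-1)*(1-β)) := (Real.sqrt_mul (by linarith) _).symm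
      _ ≤ Real.sqrt β := Real.sqrt_le_sqrt h1
      _ = u := rfl
  have hb0 : 0 ≤ b := div_nonneg (by linarith) hppos.le
  have ha2 : a^2 = t := by
    rw [htuv, ha_def, div_pow]
    congr 1
    rw [mul_pow]
  have hb2 : b^2 = 1 - ((d:ℝ)-1)*t := by
    have key : (u - q*v)^2 = p^2 - (q*u+v)^2 := by
      linear_combination (1+q^2)*hu2 + (1+q^2)*hv2 + hq2 - hp2
    rw [htuv, hb_def, div_pow, key, show ((d:ℝ)-1) = q^2 from hq2.symm]
    field_simp
  have hS : ((d:ℝ)-1)*a + b = Real.sqrt ((d:ℝ)*β) := by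
    have e : Real.sqrt ((d:ℝ)*β) = p*u := Real.sqrt_mul hdpos.le β
    rw [e, ha_def, hb_def, show ((d:ℝ)-1) = q^2 from hq2.symm]
    field_simp
    linear_combination (-u)*hpq
  have hblta : b < a := by
    have e : a - b = v*(1+q^2)/(p*q) := by
      rw [ha_def, hb_def]; field_simp; ring
    have hpos : 0 < v*(1+q^2)/(p*q) := by positivity
    linarith only [e, hpos]
  have hk : 1 - b^2 = ((d:ℝ)-1)*a^2 := by rw [ha2]; linarith only [hb2]
  -- per-coordinate lower bound
  have hcoord : ∀ i : Fin d, b ≤ Real.sqrt (lam i) := by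
    intro i
    by_contra hcon
    push_neg at hcon
    set x := Real.sqrt (lam i) with hx_def
    have hx0 : 0 ≤ x := Real.sqrt_nonneg _
    have hxx : x^2 = lam i := Real.sq_sqrt (hlam i)
    have h1 : ∑ j ∈ Finset.univ.erase i, Real.sqrt (lam j) = Real.sqrt ((d:ℝ)*β) - x := by
      have h := Finset.sum_erase_add Finset.univ (fun j => Real.sqrt (lam j)) (Finset.mem_univ i)
      rw [hs] at h
      linarith only [h]
    have h2 : ∑ j ∈ Finset.univ.erase i, lam j = 1 - lam i := by
      have h := Finset.sum_erase_add Finset.univ lam (Finset.mem_univ i)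
      rw [hsum] at h
      linarith only [h]
    have hcard : ((Finset.univ.erase i).card : ℝ) = (d:ℝ) - 1 := by
      rw [Finset.card_erase_of_mem (Finset.mem_univ i), Finset.card_univ, Fintype.card_fin]
      rw [Nat.cast_sub (by omega)]
      norm_num
    have hCS := Finset.sum_mul_sq_le_sq_mul_sq (Finset.univ.erase i)
      (fun _ => (1:ℝ)) (fun j => Real.sqrt (lam j))
    simp only [one_mul, one_pow] at hCS
    rw [h1] at hCS
    have e2 : ∑ j ∈ Finset.univ.erase i, Real.sqrt (lam j)^2 = 1 - lam i := by
      rw [Finset.sum_congr rfl (fun j _ => Real.sq_sqrt (hlam j)), h2]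
    rw [e2, Finset.sum_const, nsmul_eq_mul, hcard, ← hS, ← hxx] at hCS
    rw [mul_one] at hCS
    exact coord_aux hd1 hb0 hblta.le hx0 hcon hk hCS
  -- case b = 0
  by_cases hbz : b = 0
  · have hz : 1 - ((d:ℝ)-1)*t = 0 := by rw [← hb2, hbz]; ring
    rw [hz, mul_zero]
    exact Finset.prod_nonneg (fun i _ => hlam i)
  have hbpos : 0 < b := lt_of_le_of_ne hb0 (Ne.symm hbz)
  have hsqrtne : ∀ i : Fin d, Real.sqrt (lam i) ≠ 0 := by
    intro i
    have h := hcoord i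
    intro hcc
    rw [hcc] at h
    linarith only [h, hbpos]
  -- tangent bound summed
  have he := tangent_eq hbpos hblta
  have hsum_log : ((d:ℝ)-1)*Real.log a + Real.log b ≤ ∑ i, Real.log (Real.sqrt (lam i)) := by
    have hstep := Finset.sum_le_sum (fun i (_ : i ∈ Finset.univ) => tangent_ge hbpos hblta (hcoord i))
    have e : ∀ i : Fin d, Real.log a + tC1 a b*(Real.sqrt (lam i) - a)
        + tC2 a b*(Real.sqrt (lam i)^2 - a^2)
        = (Real.log a - tC1 a b*a - tC2 a b*a^2) + tC1 a b*Real.sqrt (lam i) + tC2 a b*lam i := by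
      intro i
      have h1 : Real.sqrt (lam i)^2 = lam i := Real.sq_sqrt (hlam i)
      linear_combination (tC2 a b)*h1
    rw [Finset.sum_congr rfl (fun i _ => e i)] at hstep
    rw [Finset.sum_add_distrib, Finset.sum_add_distrib, ← Finset.mul_sum, ← Finset.mul_sum,
      hsum, hs, Finset.sum_const, Finset.card_univ, Fintype.card_fin, nsmul_eq_mul,
      ← hS] at hstep
    have id1 : (d:ℝ)*(Real.log a - tC1 a b*a - tC2 a b*a^2)
        + tC1 a b*(((d:ℝ)-1)*a + b) + tC2 a b*(((d:ℝ)-1)*a^2 + b^2)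
        = ((d:ℝ)-1)*Real.log a + Real.log b := by
      linear_combination he
    have h1eq : ((d:ℝ)-1)*a^2 + b^2 = 1 := by linarith only [hk]
    rw [h1eq] at id1
    calc ((d:ℝ)-1)*Real.log a + Real.log b
        = (d:ℝ)*(Real.log a - tC1 a b*a - tC2 a b*a^2)
          + tC1 a b*(((d:ℝ)-1)*a + b) + tC2 a b*1 := id1.symm
      _ ≤ ∑ i, Real.log (Real.sqrt (lam i)) := by
          have : ((d:ℕ):ℝ) = (d:ℝ) := rfl
          linarith only [hstep]
  -- convert to product bound
  have hprodpos : 0 < ∏ i, Real.sqrt (lam i) :=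
    Finset.prod_pos (fun i _ => lt_of_lt_of_le hbpos (hcoord i))
  have hapos : 0 < a := lt_trans hbpos hblta
  have hlog1 : ∑ i, Real.log (Real.sqrt (lam i)) = Real.log (∏ i, Real.sqrt (lam i)) :=
    (Real.log_prod (fun i _ => hsqrtne i)).symm
  have hlog2 : ((d:ℝ)-1)*Real.log a + Real.log b = Real.log (a^(d-1)*b) := by
    rw [Real.log_mul (by positivity) hbpos.ne', Real.log_pow]
    rw [Nat.cast_sub (by omega : 1 ≤ d), Nat.cast_one]
  have hfin : a^(d-1)*b ≤ ∏ i, Real.sqrt (lam i) := by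
    rw [← Real.exp_log (show (0:ℝ) < a^(d-1)*b by positivity),
      ← Real.exp_log hprodpos]
    apply Real.exp_le_exp.2
    rw [← hlog2, ← hlog1]
    exact hsum_log
  have hprodeq : ∏ i, lam i = (∏ i, Real.sqrt (lam i))^2 := by
    rw [← Finset.prod_pow]
    exact Finset.prod_congr rfl (fun i _ => (Real.sq_sqrt (hlam i)).symm)
  have hsq : (a^(d-1)*b)^2 ≤ (∏ i, Real.sqrt (lam i))^2 :=
    pow_le_pow_left₀ (by positivity) hfin 2
  have hexpand : (a^(d-1)*b)^2 = t^(d-1)*(1 - ((d:ℝ)-1)*t) := by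
    rw [mul_pow, ← pow_mul, mul_comm (d-1) 2, pow_mul, ha2, hb2]
  rw [ge_iff_le, ← hexpand, hprodeq]
  exact hsq
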